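/- arXiv:1906.08707 — 2 statements merged into one kernel-verified Lean document; each statement's English description precedes it below -/
import Mathlib

section
/- Let n ≥ 1, let k be an integer with 0 < k < n, let x ∈ ℝⁿ, and let ν* be the unique real root of g(ν) = ∑_{j=1}^n σ(x_j + ν) - k. Then the point y* with y*_i = σ(x_i + ν*) satisfies 0 < y*_i < 1 for all i and ∑_i y*_i = k, and y* is the unique minimizer of y ↦ -⟨x, y⟩ - H_b(y) over {y ∈ (0,1)ⁿ : ∑_i y_i = k}. -/
open Real Finset

noncomputable def logistic (t : ℝ) : ℝ := 1 / (1 + Real.exp (-t))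

noncomputable def binEnt {n : ℕ} (y : Fin n → ℝ) : ℝ :=
  -∑ i, (y i * Real.log (y i) + (1 - y i) * Real.log (1 - y i))

noncomputable def lmlObj {n : ℕ} (x y : Fin n → ℝ) : ℝ :=
  -∑ i, x i * y i - binEnt y

lemma logistic_mem (t : ℝ) : logistic t ∈ Set.Ioo (0:ℝ) 1 := by
  have hE : 0 < Real.exp (-t) := Real.exp_pos _
  constructor
  · unfold logistic; positivity
  · unfold logistic
    rw [div_lt_one (by linarith)]
    linarith

lemma logistic_log (t : ℝ) :
    Real.log (logistic t) - Real.log (1 - logistic t) = t := by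
  have hE : 0 < Real.exp (-t) := Real.exp_pos _
  have h1 : (0:ℝ) < 1 + Real.exp (-t) := by linarith
  have h2 : 1 - logistic t = Real.exp (-t) / (1 + Real.exp (-t)) := by
    unfold logistic; field_simp; ring
  rw [h2]
  unfold logistic
  rw [Real.log_div one_ne_zero (ne_of_gt h1), Real.log_div (ne_of_gt hE) (ne_of_gt h1),
    Real.log_one, Real.log_exp]
  ring

lemma key_le (a b : ℝ) (ha : a ∈ Set.Ioo (0:ℝ) 1) (hb : b ∈ Set.Ioo (0:ℝ) 1) :
    a * Real.log a + (1-a) * Real.log (1-a) + (Real.log a - Real.log (1-a)) * (b - a)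
      ≤ b * Real.log b + (1-b) * Real.log (1-b) := by
  obtain ⟨ha0, ha1⟩ := ha
  obtain ⟨hb0, hb1⟩ := hb
  have h1 : Real.log (a/b) ≤ a/b - 1 := Real.log_le_sub_one_of_pos (by positivity)
  have h2 : Real.log ((1-a)/(1-b)) ≤ (1-a)/(1-b) - 1 :=
    Real.log_le_sub_one_of_pos (by apply div_pos <;> linarith)
  rw [Real.log_div (ne_of_gt ha0) (ne_of_gt hb0)] at h1
  rw [Real.log_div (by linarith) (by linarith)] at h2
  have e1 : b * (Real.log a - Real.log b) ≤ a - b := by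
    have := mul_le_mul_of_nonneg_left h1 (le_of_lt hb0)
    calc b * (Real.log a - Real.log b) ≤ b * (a/b - 1) := this
    _ = a - b := by field_simp
  have e2 : (1-b) * (Real.log (1-a) - Real.log (1-b)) ≤ (1-a) - (1-b) := by
    have := mul_le_mul_of_nonneg_left h2 (by linarith : (0:ℝ) ≤ 1 - b)
    calc (1-b) * (Real.log (1-a) - Real.log (1-b)) ≤ (1-b) * ((1-a)/(1-b) - 1) := this
    _ = (1-a) - (1-b) := by
      have h : (1:ℝ) - b ≠ 0 := by linarith
      field_simp
  nlinarith [e1, e2]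

lemma key_lt (a b : ℝ) (ha : a ∈ Set.Ioo (0:ℝ) 1) (hb : b ∈ Set.Ioo (0:ℝ) 1)
    (hab : a ≠ b) :
    a * Real.log a + (1-a) * Real.log (1-a) + (Real.log a - Real.log (1-a)) * (b - a)
      < b * Real.log b + (1-b) * Real.log (1-b) := by
  obtain ⟨ha0, ha1⟩ := ha
  obtain ⟨hb0, hb1⟩ := hb
  have h1 : Real.log (a/b) < a/b - 1 := by
    apply Real.log_lt_sub_one_of_pos (by positivity)
    intro h
    exact hab ((div_eq_one_iff_eq (ne_of_gt hb0)).mp h)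
  have h2 : Real.log ((1-a)/(1-b)) < (1-a)/(1-b) - 1 := by
    apply Real.log_lt_sub_one_of_pos (by apply div_pos <;> linarith)
    intro h
    apply hab
    have : (1-a) = (1-b) := (div_eq_one_iff_eq (by linarith)).mp h
    linarith
  rw [Real.log_div (ne_of_gt ha0) (ne_of_gt hb0)] at h1
  rw [Real.log_div (by linarith) (by linarith)] at h2
  have e1 : b * (Real.log a - Real.log b) < a - b := by
    have := mul_lt_mul_of_pos_left h1 hb0
    calc b * (Real.log a - Real.log b) < b * (a/b - 1) := this
    _ = a - b := by field_simp
  have e2 : (1-b) * (Real.log (1-a) - Real.log (1-b)) < (1-a) - (1-b) := by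
    have := mul_lt_mul_of_pos_left h2 (by linarith : (0:ℝ) < 1 - b)
    calc (1-b) * (Real.log (1-a) - Real.log (1-b)) < (1-b) * ((1-a)/(1-b) - 1) := this
    _ = (1-a) - (1-b) := by
      have h : (1:ℝ) - b ≠ 0 := by linarith
      field_simp
  nlinarith [e1, e2]

/-- if `ν*` is a root of `g(ν) = ∑_j σ(x_j + ν) - k`, then
`y*_i = σ(x_i + ν*)` is feasible and is the unique minimizer of the LML objective
over `{y ∈ (0,1)ⁿ : ∑ y_i = k}`. -/
theorem lml_solution_from_dual_root (n k : ℕ) (hn : 1 ≤ n) (hk : 0 < k) (hkn : k < n)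
    (x : Fin n → ℝ) (ν : ℝ) (hroot : (∑ j, logistic (x j + ν)) - (k : ℝ) = 0) :
    (∀ i, logistic (x i + ν) ∈ Set.Ioo (0 : ℝ) 1) ∧
    (∑ i, logistic (x i + ν)) = k ∧
    ∀ z : Fin n → ℝ, ((∀ i, z i ∈ Set.Ioo (0 : ℝ) 1) ∧ ∑ i, z i = k) →
      z ≠ (fun i => logistic (x i + ν)) →
        lmlObj x (fun i => logistic (x i + ν)) < lmlObj x z := by
  set y : Fin n → ℝ := fun i => logistic (x i + ν) with hy
  have hyo : ∀ i, y i ∈ Set.Ioo (0:ℝ) 1 := fun i => logistic_mem _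
  have hsum : (∑ i, y i) = k := by linarith [hroot]
  refine ⟨hyo, hsum, ?_⟩
  rintro z ⟨hzo, hzs⟩ hzne
  -- objective as a sum of pointwise terms
  have hobj : ∀ w : Fin n → ℝ, lmlObj x w =
      ∑ i, (w i * Real.log (w i) + (1 - w i) * Real.log (1 - w i) - x i * w i) := by
    intro w
    unfold lmlObj binEnt
    rw [Finset.sum_sub_distrib]
    ring
  rw [hobj, hobj]
  -- pointwise inequality with multiplier ν
  have hterm : ∀ i, y i * Real.log (y i) + (1 - y i) * Real.log (1 - y i) - x i * y i
      + ν * (z i - y i)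
      ≤ z i * Real.log (z i) + (1 - z i) * Real.log (1 - z i) - x i * z i := by
    intro i
    have hlog : Real.log (y i) - Real.log (1 - y i) = x i + ν := logistic_log _
    have := key_le (y i) (z i) (hyo i) (hzo i)
    rw [hlog] at this
    nlinarith [this]
  obtain ⟨i0, hi0⟩ : ∃ i, z i ≠ y i := by
    by_contra h
    push_neg at h
    exact hzne (funext h)
  have hterm0 : y i0 * Real.log (y i0) + (1 - y i0) * Real.log (1 - y i0) - x i0 * y i0
      + ν * (z i0 - y i0)
      < z i0 * Real.log (z i0) + (1 - z i0) * Real.log (1 - z i0) - x i0 * z i0 := by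
    have hlog : Real.log (y i0) - Real.log (1 - y i0) = x i0 + ν := logistic_log _
    have := key_lt (y i0) (z i0) (hyo i0) (hzo i0) (fun h => hi0 h.symm)
    rw [hlog] at this
    nlinarith [this]
  have hsumlt : ∑ i, (y i * Real.log (y i) + (1 - y i) * Real.log (1 - y i) - x i * y i
      + ν * (z i - y i))
      < ∑ i, (z i * Real.log (z i) + (1 - z i) * Real.log (1 - z i) - x i * z i) := by
    apply Finset.sum_lt_sum (fun i _ => hterm i) ⟨i0, Finset.mem_univ i0, hterm0⟩
  have hzero : ∑ i, ν * (z i - y i) = 0 := by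
    rw [← Finset.mul_sum, Finset.sum_sub_distrib, hzs, hsum]
    ring
  calc ∑ i, (y i * Real.log (y i) + (1 - y i) * Real.log (1 - y i) - x i * y i)
      = ∑ i, (y i * Real.log (y i) + (1 - y i) * Real.log (1 - y i) - x i * y i
        + ν * (z i - y i)) := by rw [Finset.sum_add_distrib, hzero]; ring
    _ < _ := hsumlt
end

section
/- Let n ≥ 1, let k be an integer with 0 < k < n, and let x ∈ ℝⁿ. The LML projection y* = Π_{L_k}(x) preserves the order of the coordinates of x: for all indices i, j, if x_i ≥ x_j then y*_i ≥ y*_j, and if x_i > x_j then y*_i > y*_j. -/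
open Real Finset

noncomputable def fE (t : ℝ) : ℝ := t * Real.log t + (1 - t) * Real.log (1 - t)

lemma log_secant {s t : ℝ} (hs : 0 < s) (ht : 0 < t) :
    Real.log s - Real.log t ≤ (s - t) / t := by
  have h := Real.log_le_sub_one_of_pos (x := s / t) (by positivity)
  rw [Real.log_div hs.ne' ht.ne'] at h
  have h2 : s / t - 1 = (s - t) / t := by field_simp
  linarith [h2 ▸ h]

lemma log_secant_lt {s t : ℝ} (hs : 0 < s) (ht : 0 < t) (hne : s ≠ t) :
    Real.log s - Real.log t < (s - t) / t := by
  have h := Real.log_lt_sub_one_of_pos (x := s / t) (by positivity)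
    (by intro h; apply hne; field_simp at h; linarith)
  rw [Real.log_div hs.ne' ht.ne'] at h
  have h2 : s / t - 1 = (s - t) / t := by field_simp
  linarith

/-- upper tangent/secant bound for the perturbation argument -/
lemma fE_ub {t d : ℝ} (ht0 : 0 < t) (ht1 : t < 1) (h0 : 0 < t + d) (h1 : t + d < 1) :
    fE (t + d) ≤ fE t + d * (Real.log t - Real.log (1 - t)) + d ^ 2 * (1 / t + 1 / (1 - t)) := by
  have ht1' : (0:ℝ) < 1 - t := by linarith
  have l1 : Real.log (t + d) - Real.log t ≤ d / t := by
    have := log_secant h0 ht0; simpa using this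
  have l2 : Real.log (1 - (t + d)) - Real.log (1 - t) ≤ -d / (1 - t) := by
    have := log_secant (t := 1 - t) (s := 1 - (t + d)) (by linarith) ht1'
    have e : (1 - (t + d) - (1 - t)) / (1 - t) = -d / (1 - t) := by ring_nf
    linarith [e ▸ this]
  have m1 : (t + d) * (Real.log (t + d) - Real.log t) ≤ (t + d) * (d / t) :=
    mul_le_mul_of_nonneg_left l1 h0.le
  have m2 : (1 - (t + d)) * (Real.log (1 - (t + d)) - Real.log (1 - t)) ≤ (1 - (t + d)) * (-d / (1 - t)) :=
    mul_le_mul_of_nonneg_left l2 (by linarith)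
  have e1 : (t + d) * (d / t) = d + d ^ 2 / t := by field_simp
  have e2 : (1 - (t + d)) * (-d / (1 - t)) = -d + d ^ 2 / (1 - t) := by field_simp; ring
  unfold fE
  have expand : (t + d) * Real.log (t + d) + (1 - (t + d)) * Real.log (1 - (t + d))
      = (t + d) * (Real.log (t + d) - Real.log t) + (1 - (t + d)) * (Real.log (1 - (t + d)) - Real.log (1 - t))
        + t * Real.log t + (1 - t) * Real.log (1 - t) + d * (Real.log t - Real.log (1 - t)) := by ring
  have e3 : d ^ 2 * (1 / t + 1 / (1 - t)) = d ^ 2 / t + d ^ 2 / (1 - t) := by ring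
  rw [expand]
  linarith [e1 ▸ m1, e2 ▸ m2, e3]

/-- strict lower tangent bound (strict convexity) -/
lemma fE_lb {t m : ℝ} (ht0 : 0 < t) (ht1 : t < 1) (hm0 : 0 < m) (hm1 : m < 1) (hne : t ≠ m) :
    fE m + (t - m) * (Real.log m - Real.log (1 - m)) < fE t := by
  have l1 : Real.log m - Real.log t < (m - t) / t := log_secant_lt hm0 ht0 (by intro h; exact hne h.symm)
  have l2 : Real.log (1 - m) - Real.log (1 - t) < ((1 - m) - (1 - t)) / (1 - t) :=
    log_secant_lt (by linarith) (by linarith) (by intro h; apply hne; linarith)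
  have m1 : t * (Real.log m - Real.log t) < t * ((m - t) / t) := by
    exact mul_lt_mul_of_pos_left l1 ht0
  have m2 : (1 - t) * (Real.log (1 - m) - Real.log (1 - t)) < (1 - t) * (((1 - m) - (1 - t)) / (1 - t)) :=
    mul_lt_mul_of_pos_left l2 (by linarith)
  have e1 : t * ((m - t) / t) = m - t := by field_simp
  have e2 : (1 - t) * (((1 - m) - (1 - t)) / (1 - t)) = t - m := by
    have h : (1:ℝ) - t ≠ 0 := by linarith
    field_simp; ring
  unfold fE
  nlinarith [e1 ▸ m1, e2 ▸ m2]

lemma sum_two_diff {n : ℕ} {i j : Fin n} (hij : i ≠ j) (F G : Fin n → ℝ)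
    (h : ∀ l, l ≠ i → l ≠ j → F l = G l) :
    ∑ l, F l = ∑ l, G l + (F i - G i) + (F j - G j) := by
  have hjmem : j ∈ (univ : Finset (Fin n)).erase i := by simp [hij.symm, Ne.symm hij]
  have hsplit : ∀ w : Fin n → ℝ,
      ∑ l, w l = w i + (w j + ∑ l ∈ ((univ : Finset (Fin n)).erase i).erase j, w l) := by
    intro w
    rw [Finset.add_sum_erase _ w hjmem, Finset.add_sum_erase _ w (mem_univ i)]
  have htail : ∑ l ∈ ((univ : Finset (Fin n)).erase i).erase j, F l
      = ∑ l ∈ ((univ : Finset (Fin n)).erase i).erase j, G l := by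
    apply Finset.sum_congr rfl
    intro l hl
    simp only [Finset.mem_erase, Finset.mem_univ] at hl
    exact h l hl.2.1 hl.1
  rw [hsplit F, hsplit G, htail]; ring

lemma lmlObj_eq {n : ℕ} (x y : Fin n → ℝ) :
    lmlObj x y = ∑ i, (fE (y i) - x i * y i) := by
  unfold lmlObj binEnt fE
  rw [Finset.sum_sub_distrib]
  ring

set_option maxHeartbeats 1000000 in
/-- the LML projection (the minimizer of the LML objective over
`{y ∈ (0,1)ⁿ : ∑ y_i = k}`) preserves the order of the coordinates of `x`. -/
theorem lml_projection_order_preserving (n k : ℕ) (hn : 1 ≤ n) (hk : 0 < k) (hkn : k < n)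
    (x y : Fin n → ℝ)
    (hyfeas : (∀ i, y i ∈ Set.Ioo (0 : ℝ) 1) ∧ ∑ i, y i = k)
    (hymin : ∀ z : Fin n → ℝ, ((∀ i, z i ∈ Set.Ioo (0 : ℝ) 1) ∧ ∑ i, z i = k) →
      lmlObj x y ≤ lmlObj x z) :
    ∀ i j, (x j ≤ x i → y j ≤ y i) ∧ (x j < x i → y j < y i) := by
  obtain ⟨hy01, hysum⟩ := hyfeas
  have key : ∀ i j, x j < x i → y j < y i := by
    intro i j hx
    by_contra hcon
    push_neg at hcon
    have hij : i ≠ j := by rintro rfl; exact lt_irrefl _ hx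
    obtain ⟨ha0, ha1⟩ := hy01 i
    obtain ⟨hb0, hb1⟩ := hy01 j
    set a := y i with ha
    set b := y j with hb
    set δ := x i - x j with hδ
    have hδ0 : 0 < δ := by simp only [hδ]; linarith
    have h1a : (0:ℝ) < 1 - a := by linarith
    have h1b : (0:ℝ) < 1 - b := by linarith
    set C := 1/a + 1/(1-a) + 1/b + 1/(1-b) with hC
    have hC0 : 0 < C := by positivity
    set ε := min (min (a/2) ((1-b)/2)) (δ/(2*C)) with hε
    have hε0 : 0 < ε := by
      apply lt_min (lt_min (by positivity) (by positivity)) (by positivity)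
    have hεa : ε ≤ a/2 := le_trans (min_le_left _ _) (min_le_left _ _)
    have hεb : ε ≤ (1-b)/2 := le_trans (min_le_left _ _) (min_le_right _ _)
    have hεδ : ε ≤ δ/(2*C) := min_le_right _ _
    have hai0 : 0 < a + ε := by linarith
    have hai1 : a + ε < 1 := by linarith
    have hbj0 : 0 < b - ε := by linarith
    have hbj1 : b - ε < 1 := by linarith
    set z : Fin n → ℝ := fun l => if l = i then a + ε else if l = j then b - ε else y l with hz
    have hzi : z i = a + ε := by simp [hz]
    have hzj : z j = b - ε := by simp [hz, Ne.symm hij]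
    have hzoff : ∀ l, l ≠ i → l ≠ j → z l = y l := by
      intro l h1 h2; simp [hz, h1, h2]
    have hzfeas : ∀ l, z l ∈ Set.Ioo (0:ℝ) 1 := by
      intro l
      by_cases h1 : l = i
      · subst h1; rw [hzi]; exact ⟨hai0, hai1⟩
      by_cases h2 : l = j
      · subst h2; rw [hzj]; exact ⟨hbj0, hbj1⟩
      · rw [hzoff l h1 h2]; exact hy01 l
    have hzsum : ∑ l, z l = k := by
      rw [sum_two_diff hij z y hzoff, hzi, hzj, hysum]; ring
    have hmin := hymin z ⟨hzfeas, hzsum⟩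
    have hobj := sum_two_diff hij (fun l => fE (z l) - x l * z l)
      (fun l => fE (y l) - x l * y l) (by intro l h1 h2; simp only [hzoff l h1 h2])
    simp only [hzi, hzj] at hobj
    rw [← lmlObj_eq, ← lmlObj_eq] at hobj
    rw [← ha, ← hb] at hobj
    have hub1 := fE_ub (d := ε) ha0 ha1 hai0 hai1
    have hub2 := fE_ub (d := -ε) hb0 hb1 (by linarith) (by linarith)
    rw [show b + -ε = b - ε by ring] at hub2
    have hlog1 : Real.log a ≤ Real.log b := Real.log_le_log ha0 hcon
    have hlog2 : Real.log (1-b) ≤ Real.log (1-a) := Real.log_le_log h1b (by linarith)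
    have ht1 : 0 ≤ ε * (Real.log b - Real.log a) := mul_nonneg hε0.le (by linarith)
    have ht2 : 0 ≤ ε * (Real.log (1-a) - Real.log (1-b)) := mul_nonneg hε0.le (by linarith)
    have hCne : C ≠ 0 := ne_of_gt hC0
    have h1 : ε * C ≤ δ/2 := by
      have h2 := mul_le_mul_of_nonneg_right hεδ hC0.le
      have e : δ/(2*C)*C = δ/2 := by field_simp
      linarith
    have hquad : ε ^ 2 * C ≤ ε * (δ/2) := by
      have h2 := mul_le_mul_of_nonneg_left h1 hε0.le
      have e2 : ε * (ε * C) = ε ^ 2 * C := by ring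
      linarith
    have hεsq : (-ε) ^ 2 = ε ^ 2 := by ring
    rw [hεsq] at hub2
    have hfinal : lmlObj x z ≤ lmlObj x y - ε * (δ/2) := by
      have hlin : (fE (a + ε) - x i * (a + ε) - (fE a - x i * a))
          + (fE (b - ε) - x j * (b - ε) - (fE b - x j * b))
          = (fE (a + ε) - fE a) + (fE (b - ε) - fE b) - ε * δ := by
        simp only [hδ]; ring
      have hent : (fE (a + ε) - fE a) + (fE (b - ε) - fE b) ≤ ε * (δ/2) := by
        have e1 : ε ^ 2 * (1/a + 1/(1-a)) + ε ^ 2 * (1/b + 1/(1-b)) = ε ^ 2 * C := by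
          rw [hC]; ring
        nlinarith [hub1, hub2, ht1, ht2, hquad]
      rw [hobj]
      have e3 : ε * δ = 2 * (ε * (δ/2)) := by ring
      linarith [hlin, hent, e3]
    linarith [mul_pos hε0 (by linarith : (0:ℝ) < δ/2)]
  intro i j
  refine ⟨?_, key i j⟩
  intro hx
  rcases lt_or_eq_of_le hx with h | h
  · exact (key i j h).le
  by_contra hcon
  push_neg at hcon
  have hij : i ≠ j := by rintro rfl; exact lt_irrefl _ hcon
  obtain ⟨ha0, ha1⟩ := hy01 i
  obtain ⟨hb0, hb1⟩ := hy01 j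
  set a := y i with ha
  set b := y j with hb
  set m := (a + b) / 2 with hm
  have hm0 : 0 < m := by simp only [hm]; linarith
  have hm1 : m < 1 := by simp only [hm]; linarith
  have ham : a ≠ m := by simp only [hm]; intro h'; rw [ha, hb] at *; linarith
  have hbm : b ≠ m := by simp only [hm]; intro h'; linarith
  set z : Fin n → ℝ := fun l => if l = i then m else if l = j then m else y l with hz
  have hzi : z i = m := by simp [hz]
  have hzj : z j = m := by simp [hz, Ne.symm hij]
  have hzoff : ∀ l, l ≠ i → l ≠ j → z l = y l := by
    intro l h1 h2; simp [hz, h1, h2]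
  have hzfeas : ∀ l, z l ∈ Set.Ioo (0:ℝ) 1 := by
    intro l
    by_cases h1 : l = i
    · subst h1; rw [hzi]; exact ⟨hm0, hm1⟩
    by_cases h2 : l = j
    · subst h2; rw [hzj]; exact ⟨hm0, hm1⟩
    · rw [hzoff l h1 h2]; exact hy01 l
  have hzsum : ∑ l, z l = k := by
    rw [sum_two_diff hij z y hzoff, hzi, hzj, hysum, hm]; ring
  have hmin := hymin z ⟨hzfeas, hzsum⟩
  have hobj := sum_two_diff hij (fun l => fE (z l) - x l * z l)
    (fun l => fE (y l) - x l * y l) (by intro l h1 h2; simp only [hzoff l h1 h2])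
  simp only [hzi, hzj] at hobj
  rw [← lmlObj_eq, ← lmlObj_eq] at hobj
  rw [← ha, ← hb, (h : x j = x i)] at hobj
  have hlb1 := fE_lb ha0 ha1 hm0 hm1 ham
  have hlb2 := fE_lb hb0 hb1 hm0 hm1 hbm
  have h2m : a + b - 2 * m = 0 := by rw [hm]; ring
  set L := Real.log m - Real.log (1 - m) with hL
  have hsumL : (a - m) * L + (b - m) * L = 0 := by
    have e : (a - m) * L + (b - m) * L = (a + b - 2 * m) * L := by ring
    rw [e, h2m, zero_mul]
  have hE : 2 * fE m < fE a + fE b := by linarith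
  have hxzero : x i * a + x i * b - x i * m - x i * m = 0 := by
    have e : x i * a + x i * b - x i * m - x i * m = x i * (a + b - 2 * m) := by ring
    rw [e, h2m, mul_zero]
  linarith
end
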